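/- Consider the linear program: minimize R₃ n₃ + R₄ (F - n₁ - n₂ - n₃) subject to α n₁ + n₂ ≤ α F β_c, n₂ + n₃ ≤ F β_e, n₁ + n₂ + n₃ ≤ F, n₁, n₂, n₃ ≥ 0 with R₃ ≥ R₄ > 0, α > 1, 0 ≤ β_c ≤ 1, 0 ≤ β_e ≤ 1, and α β_c ≤ 1. Then an optimal solution has n₃ = 0, n₂ = min(α F β_c, F β_e), n₁ = F max(β_c - min(β_c, β_e/α), 0), and the optimal value is R₄ (F - n₁ - n₂). -/

import Mathlib

/-- LP: minimize `R₃ n₃ + R₄ (F - n₁ - n₂ - n₃)` subject to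
`α n₁ + n₂ ≤ α F β_c`, `n₂ + n₃ ≤ F βₑ`, `n₁ + n₂ + n₃ ≤ F`, `n ≥ 0`,
with `R₃ ≥ R₄ > 0`, `α > 1`, `0 ≤ β_c ≤ 1`, `0 ≤ βₑ ≤ 1`, `α β_c ≤ 1`.
Then `n₃ = 0`, `n₂ = min(α F β_c, F βₑ)`, `n₁ = F max(β_c - min(β_c, βₑ/α), 0)`
is feasible and optimal, with optimal value `R₄ (F - n₁ - n₂)`. -/
theorem stmt6 (R3 R4 α F βc βe : ℝ)
    (hR4 : 0 < R4) (hR : R4 ≤ R3) (hα : 1 < α) (hF : 0 < F)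
    (hβc0 : 0 ≤ βc) (hβc1 : βc ≤ 1) (hβe0 : 0 ≤ βe) (hβe1 : βe ≤ 1)
    (hαβc : α * βc ≤ 1) :
    let n1 := F * max (βc - min βc (βe / α)) 0
    let n2 := min (α * F * βc) (F * βe)
    (α * n1 + n2 ≤ α * F * βc ∧ n2 + 0 ≤ F * βe ∧ n1 + n2 + 0 ≤ F ∧
      0 ≤ n1 ∧ 0 ≤ n2) ∧
    (∀ m1 m2 m3 : ℝ, α * m1 + m2 ≤ α * F * βc → m2 + m3 ≤ F * βe →
      m1 + m2 + m3 ≤ F → 0 ≤ m1 → 0 ≤ m2 → 0 ≤ m3 →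
      R4 * (F - n1 - n2) ≤ R3 * m3 + R4 * (F - m1 - m2 - m3)) := by
  intro n1 n2
  have hα0 : (0:ℝ) < α := lt_trans one_pos hα
  set m := min βc (βe / α) with hm
  have hmle : m ≤ βc := min_le_left _ _
  have hm0 : 0 ≤ m := le_min hβc0 (div_nonneg hβe0 hα0.le)
  have hn1 : n1 = F * (βc - m) := by
    have : max (βc - m) 0 = βc - m := max_eq_left (by linarith)
    simp [n1, this]
    exact Or.inl hm.symm
  have hn2 : n2 = α * F * m := by
    rcases le_total βc (βe / α) with h | h
    · have hc : βc * α ≤ βe := (le_div_iff₀ hα0).mp h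
      rw [show n2 = min (α * F * βc) (F * βe) from rfl, hm, min_eq_left h,
        min_eq_left (by nlinarith)]
    · have hc : βe ≤ βc * α := (div_le_iff₀ hα0).mp h
      rw [show n2 = min (α * F * βc) (F * βe) from rfl, hm, min_eq_right h,
        min_eq_right (by nlinarith)]
      field_simp
  constructor
  · refine ⟨by rw [hn1, hn2]; ring_nf; nlinarith, ?_, ?_, ?_, ?_⟩
    · rw [hn2]
      rcases le_total βc (βe / α) with h | h
      · have hc : βc * α ≤ βe := (le_div_iff₀ hα0).mp h
        rw [hm, min_eq_left h]; nlinarith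
      · rw [hm, min_eq_right h]
        have : α * F * (βe / α) = F * βe := by field_simp
        linarith
    · rw [hn1, hn2]
      have ha : (α-1)*F*m ≤ (α-1)*F*βc :=
        mul_le_mul_of_nonneg_left hmle (mul_nonneg (by linarith) hF.le)
      have hb : F*(α*βc) ≤ F*1 := mul_le_mul_of_nonneg_left hαβc hF.le
      nlinarith
    · rw [hn1]; exact mul_nonneg hF.le (by linarith)
    · rw [hn2]; positivity
  · intro m1 m2 m3 h1 h2 h3 hm1 hm2 hm3
    have key : m1 + m2 ≤ F * βc + (α - 1) * F * m := by
      rcases le_total βc (βe / α) with h | h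
      · rw [hm, min_eq_left h]
        nlinarith
      · have hc : βe ≤ βc * α := (div_le_iff₀ hα0).mp h
        rw [hm, min_eq_right h]
        have : (α - 1) * F * (βe / α) = (1 - 1/α) * (F * βe) := by
          field_simp
        rw [this]
        have hm2' : m2 ≤ F * βe := by linarith
        have hd : m2 / α * α = m2 := div_mul_cancel₀ m2 hα0.ne'
        have h1' : m1 + m2 / α ≤ F * βc := by nlinarith [hd, h1, hα0]
        have h1α : (0:ℝ) ≤ 1 - 1/α := by
          have : 1/α ≤ 1 := by rw [div_le_one hα0]; linarith
          linarith
        have hb := mul_le_mul_of_nonneg_left hm2' h1α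
        have hid : (1 - 1/α) * m2 = m2 - m2 / α := by ring
        linarith
    have hobj : F - n1 - n2 = F - (F * βc + (α - 1) * F * m) := by
      rw [hn1, hn2]; ring
    rw [hobj]
    nlinarith
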